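/- Let h(y) = ∏_{i=1}^n (ε_i·y + k_i)^{a_i} where each ε_i ∈ {+1, -1}, each k_i > 0, each a_i ≥ 1, and at least one ε_i = +1 and at least one ε_i = -1. Let k_- = min{k_i : ε_i = -1}. Then h' has exactly one root ξ in the interval (-min{k_i : ε_i = +1}, k_-), this root is simple, ξ is a local maximum of h, and h is strictly decreasing on (ξ, k_-). Moreover ξ ∈ (0, k_-) if and only if γ := Σ_{i=1}^n ε_i·a_i/k_i > 0. -/

import Mathlib

open Polynomial

theorem stmt6 (n : ℕ) (ε : Fin n → ℝ) (hε : ∀ i, ε i = 1 ∨ ε i = -1)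
    (k : Fin n → ℝ) (hk : ∀ i, 0 < k i) (a : Fin n → ℕ) (ha : ∀ i, 1 ≤ a i)
    (kp km : ℝ)
    (hkp : IsLeast {r | ∃ i, ε i = 1 ∧ k i = r} kp)
    (hkm : IsLeast {r | ∃ i, ε i = -1 ∧ k i = r} km)
    (h : ℝ[X]) (hh : h = ∏ i, (C (ε i) * X + C (k i)) ^ a i) :
    ∃ ξ ∈ Set.Ioo (-kp) km,
      (derivative h).eval ξ = 0 ∧
      (∀ ζ ∈ Set.Ioo (-kp) km, (derivative h).eval ζ = 0 → ζ = ξ) ∧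
      (derivative h).rootMultiplicity ξ = 1 ∧
      IsLocalMax (fun y => h.eval y) ξ ∧
      StrictAntiOn (fun y => h.eval y) (Set.Ioo ξ km) ∧
      (0 < ξ ↔ 0 < ∑ i, ε i * (a i : ℝ) / k i) := by
  classical
  obtain ⟨⟨ip, hip1, hipk⟩, hkpmin⟩ := hkp
  obtain ⟨⟨im, him1, himk⟩, hkmmin⟩ := hkm
  have hkp0 : 0 < kp := hipk ▸ hk ip
  have hkm0 : 0 < km := himk ▸ hk im
  have hapos : ∀ i, (0:ℝ) < a i := fun i => by exact_mod_cast ha i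
  set g : ℝ → ℝ := fun y => ∑ i, ε i * (a i : ℝ) / (ε i * y + k i) with hgdef
  -- positivity of linear factors on the interval
  have hpos : ∀ y ∈ Set.Ioo (-kp) km, ∀ i, 0 < ε i * y + k i := by
    intro y hy i
    rcases hε i with h1 | h1
    · have : kp ≤ k i := hkpmin ⟨i, h1, rfl⟩
      rw [h1]; simp only [one_mul]; linarith [hy.1]
    · have : km ≤ k i := hkmmin ⟨i, h1, rfl⟩
      rw [h1]; simp only [neg_one_mul]; linarith [hy.2]
  have heval : ∀ y, h.eval y = ∏ i, (ε i * y + k i) ^ a i := by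
    intro y; simp [hh, eval_prod]
  have hhpos : ∀ y ∈ Set.Ioo (-kp) km, 0 < h.eval y := by
    intro y hy
    rw [heval]
    exact Finset.prod_pos fun i _ => pow_pos (hpos y hy i) _
  -- the key logarithmic-derivative identity
  have key : ∀ y ∈ Set.Ioo (-kp) km, HasDerivAt (fun t => h.eval t) (h.eval y * g y) y := by
    intro y hy
    have hf : ∀ i ∈ Finset.univ, HasDerivAt (fun t => (ε i * t + k i) ^ a i)
        ((a i : ℝ) * (ε i * y + k i) ^ (a i - 1) * ε i) y := by
      intro i _
      have h1 : HasDerivAt (fun t => ε i * t + k i) (ε i) y := by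
        simpa using ((hasDerivAt_id y).const_mul (ε i)).add_const (k i)
      simpa [mul_comm] using h1.fun_pow (a i)
    have hprod := HasDerivAt.fun_finsetProd hf
    have hfun : (fun t => h.eval t) = (fun t => ∏ i, (ε i * t + k i) ^ a i) :=
      funext fun t => heval t
    have hsum : ∑ i, (∏ j ∈ Finset.univ.erase i, (ε j * y + k j) ^ a j) •
        ((a i : ℝ) * (ε i * y + k i) ^ (a i - 1) * ε i) = h.eval y * g y := by
      rw [heval y, hgdef, Finset.mul_sum]
      refine Finset.sum_congr rfl fun i _ => ?_
      obtain ⟨b, hb⟩ : ∃ b, a i = b + 1 := ⟨a i - 1, (Nat.succ_pred_eq_of_pos (ha i)).symm⟩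
      have hu : (0:ℝ) < ε i * y + k i := hpos y hy i
      have hP : (∏ j, (ε j * y + k j) ^ a j) =
          (∏ j ∈ Finset.univ.erase i, (ε j * y + k j) ^ a j) * (ε i * y + k i) ^ a i :=
        (Finset.prod_erase_mul _ _ (Finset.mem_univ i)).symm
      rw [hP, smul_eq_mul, hb]
      simp only [Nat.add_sub_cancel]
      generalize (∏ j ∈ Finset.univ.erase i, (ε j * y + k j) ^ a j) = P
      generalize ε i * y + k i = u at hu ⊢
      have hu0 := hu.ne'
      field_simp
      ring
    rw [hfun]
    exact hsum ▸ hprod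
  have hderiv_eval : ∀ y ∈ Set.Ioo (-kp) km,
      (derivative h).eval y = h.eval y * g y := by
    intro y hy
    rw [← Polynomial.deriv]
    exact (key y hy).deriv
  -- g is strictly decreasing on the interval
  have gsanti : StrictAntiOn g (Set.Ioo (-kp) km) := by
    intro x hx y hy hxy
    refine Finset.sum_lt_sum_of_nonempty ⟨ip, Finset.mem_univ ip⟩ fun i _ => ?_
    rcases hε i with h1 | h1
    · rw [h1]
      simp only [one_mul]
      have h2 : 0 < x + k i := by have := hpos x hx i; rwa [h1, one_mul] at this
      have := div_lt_div_of_pos_left (hapos i) h2 (by linarith : x + k i < y + k i)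
      linarith
    · rw [h1]
      have h2 : 0 < -y + k i := by have := hpos y hy i; rwa [h1, neg_one_mul] at this
      have h3 := div_lt_div_of_pos_left (hapos i) h2 (by linarith : -y + k i < -x + k i)
      have e1 : (-1 : ℝ) * (a i : ℝ) / (-1 * y + k i) = -((a i : ℝ) / (-y + k i)) := by
        rw [neg_one_mul, neg_one_mul, neg_div]
      have e2 : (-1 : ℝ) * (a i : ℝ) / (-1 * x + k i) = -((a i : ℝ) / (-x + k i)) := by
        rw [neg_one_mul, neg_one_mul, neg_div]
      rw [e1, e2]
      linarith
  -- continuity of g on the interval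
  have gcont : ContinuousOn g (Set.Ioo (-kp) km) := by
    apply continuousOn_finset_sum
    intro i _
    exact ContinuousOn.div continuousOn_const
      ((continuous_const.mul continuous_id).add continuous_const).continuousOn
      (fun y hy => (hpos y hy i).ne')
  -- a point where g is positive
  set S : ℝ := ∑ i, (a i : ℝ) / km with hS
  have hS0 : 0 ≤ S := Finset.sum_nonneg fun i _ => div_nonneg (a i).cast_nonneg hkm0.le
  set δ : ℝ := min (kp / 2) ((a ip : ℝ) / (S + 1)) with hδ
  have hδ0 : 0 < δ := lt_min (by linarith) (div_pos (hapos ip) (by linarith))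
  set x₀ : ℝ := -kp + δ with hx₀
  have hx₀neg : x₀ < 0 := by
    have : δ ≤ kp / 2 := min_le_left _ _
    simp only [hx₀]; linarith
  have hx₀mem : x₀ ∈ Set.Ioo (-kp) km := ⟨by simp only [hx₀]; linarith, by linarith⟩
  have hgx₀ : 0 < g x₀ := by
    have hterm : ε ip * (a ip : ℝ) / (ε ip * x₀ + k ip) = (a ip : ℝ) / δ := by
      rw [hip1, hipk]; simp only [one_mul, hx₀]; ring_nf
    have hbig : S + 1 ≤ (a ip : ℝ) / δ := by
      rw [le_div_iff₀ hδ0]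
      have : δ ≤ (a ip : ℝ) / (S + 1) := min_le_right _ _
      calc (S + 1) * δ ≤ (S + 1) * ((a ip : ℝ) / (S + 1)) := by
            apply mul_le_mul_of_nonneg_left this (by linarith)
        _ = (a ip : ℝ) := by field_simp
    have hrest : ∀ j ∈ Finset.univ.erase ip,
        -((a j : ℝ) / km) ≤ ε j * (a j : ℝ) / (ε j * x₀ + k j) := by
      intro j _
      rcases hε j with h1 | h1
      · have := hpos x₀ hx₀mem j
        rw [h1]
        have : 0 ≤ (a j : ℝ) / (1 * x₀ + k j) :=
          div_nonneg (a j).cast_nonneg (by rw [h1] at this; linarith)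
        have h2 : 0 ≤ (a j : ℝ) / km := div_nonneg (a j).cast_nonneg hkm0.le
        simp only [one_mul] at this ⊢
        linarith
      · have hkj : km ≤ k j := hkmmin ⟨j, h1, rfl⟩
        rw [h1]
        have h2 : 0 < -x₀ + k j := by have := hpos x₀ hx₀mem j; rwa [h1, neg_one_mul] at this
        have h3 : (a j : ℝ) / (-x₀ + k j) ≤ (a j : ℝ) / km := by
          apply div_le_div_of_nonneg_left (a j).cast_nonneg hkm0
          linarith
        have e : (-1 : ℝ) * (a j : ℝ) / (-1 * x₀ + k j) = -((a j : ℝ) / (-x₀ + k j)) := by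
          rw [neg_one_mul, neg_one_mul, neg_div]
        rw [e]
        linarith
    have hsum_rest : -S ≤ ∑ j ∈ Finset.univ.erase ip, ε j * (a j : ℝ) / (ε j * x₀ + k j) := by
      have h1 : ∑ j ∈ Finset.univ.erase ip, -((a j : ℝ) / km) ≤
          ∑ j ∈ Finset.univ.erase ip, ε j * (a j : ℝ) / (ε j * x₀ + k j) :=
        Finset.sum_le_sum hrest
      have h2 : ∑ j ∈ Finset.univ.erase ip, ((a j : ℝ) / km) ≤ S := by
        rw [hS]
        apply Finset.sum_le_sum_of_subset_of_nonneg (Finset.erase_subset _ _)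
        intro i _ _
        exact div_nonneg (a i).cast_nonneg hkm0.le
      rw [Finset.sum_neg_distrib] at h1
      linarith
    have : g x₀ = ε ip * (a ip : ℝ) / (ε ip * x₀ + k ip) +
        ∑ j ∈ Finset.univ.erase ip, ε j * (a j : ℝ) / (ε j * x₀ + k j) :=
      (Finset.add_sum_erase _ _ (Finset.mem_univ ip)).symm
    rw [this, hterm]
    linarith
  -- a point where g is negative
  set T : ℝ := ∑ i, (a i : ℝ) / kp with hT
  have hT0 : 0 ≤ T := Finset.sum_nonneg fun i _ => div_nonneg (a i).cast_nonneg hkp0.le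
  set δ' : ℝ := min (km / 2) ((a im : ℝ) / (T + 1)) with hδ'
  have hδ'0 : 0 < δ' := lt_min (by linarith) (div_pos (hapos im) (by linarith))
  set x₁ : ℝ := km - δ' with hx₁
  have hx₁pos : 0 < x₁ := by
    have : δ' ≤ km / 2 := min_le_left _ _
    simp only [hx₁]; linarith
  have hx₁mem : x₁ ∈ Set.Ioo (-kp) km := ⟨by linarith, by simp only [hx₁]; linarith⟩
  have hgx₁ : g x₁ < 0 := by
    have hterm : ε im * (a im : ℝ) / (ε im * x₁ + k im) = -((a im : ℝ) / δ') := by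
      rw [him1, himk]
      have : (-1 : ℝ) * x₁ + km = δ' := by simp only [hx₁]; ring
      rw [this, neg_one_mul, neg_div]
    have hbig : T + 1 ≤ (a im : ℝ) / δ' := by
      rw [le_div_iff₀ hδ'0]
      have : δ' ≤ (a im : ℝ) / (T + 1) := min_le_right _ _
      calc (T + 1) * δ' ≤ (T + 1) * ((a im : ℝ) / (T + 1)) := by
            apply mul_le_mul_of_nonneg_left this (by linarith)
        _ = (a im : ℝ) := by field_simp
    have hrest : ∀ j ∈ Finset.univ.erase im,
        ε j * (a j : ℝ) / (ε j * x₁ + k j) ≤ (a j : ℝ) / kp := by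
      intro j _
      rcases hε j with h1 | h1
      · have hkj : kp ≤ k j := hkpmin ⟨j, h1, rfl⟩
        rw [h1]
        have h2 : 0 < 1 * x₁ + k j := by have := hpos x₁ hx₁mem j; rwa [h1] at this
        simp only [one_mul] at h2 ⊢
        apply div_le_div_of_nonneg_left (a j).cast_nonneg hkp0
        linarith
      · rw [h1]
        have h2 : 0 < -x₁ + k j := by have := hpos x₁ hx₁mem j; rwa [h1, neg_one_mul] at this
        have e : (-1 : ℝ) * (a j : ℝ) / (-1 * x₁ + k j) = -((a j : ℝ) / (-x₁ + k j)) := by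
          rw [neg_one_mul, neg_one_mul, neg_div]
        rw [e]
        have h3 : 0 ≤ (a j : ℝ) / (-x₁ + k j) := div_nonneg (a j).cast_nonneg h2.le
        have h4 : 0 ≤ (a j : ℝ) / kp := div_nonneg (a j).cast_nonneg hkp0.le
        linarith
    have hsum_rest : ∑ j ∈ Finset.univ.erase im, ε j * (a j : ℝ) / (ε j * x₁ + k j) ≤ T := by
      have h1 := Finset.sum_le_sum hrest
      have h2 : ∑ j ∈ Finset.univ.erase im, ((a j : ℝ) / kp) ≤ T := by
        rw [hT]
        apply Finset.sum_le_sum_of_subset_of_nonneg (Finset.erase_subset _ _)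
        intro i _ _
        exact div_nonneg (a i).cast_nonneg hkp0.le
      linarith
    have : g x₁ = ε im * (a im : ℝ) / (ε im * x₁ + k im) +
        ∑ j ∈ Finset.univ.erase im, ε j * (a j : ℝ) / (ε j * x₁ + k j) :=
      (Finset.add_sum_erase _ _ (Finset.mem_univ im)).symm
    rw [this, hterm]
    linarith
  -- the root of g via the intermediate value theorem
  have hx₀x₁ : x₀ ≤ x₁ := by linarith
  have hIcc : Set.Icc x₀ x₁ ⊆ Set.Ioo (-kp) km := fun y hy =>
    ⟨lt_of_lt_of_le hx₀mem.1 hy.1, lt_of_le_of_lt hy.2 hx₁mem.2⟩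
  obtain ⟨ξ, hξIcc, hgξ⟩ : ∃ ξ ∈ Set.Icc x₀ x₁, g ξ = 0 := by
    have := intermediate_value_Icc' hx₀x₁ (gcont.mono hIcc)
    have h0 : (0:ℝ) ∈ Set.Icc (g x₁) (g x₀) := ⟨hgx₁.le, hgx₀.le⟩
    obtain ⟨ξ, hξ, hgξ⟩ := this h0
    exact ⟨ξ, hξ, hgξ⟩
  have hξmem : ξ ∈ Set.Ioo (-kp) km := hIcc hξIcc
  -- conclusions
  have hroot : (derivative h).eval ξ = 0 := by
    rw [hderiv_eval ξ hξmem, hgξ, mul_zero]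
  -- monotonicity pieces
  have smono : StrictMonoOn (fun y => h.eval y) (Set.Ioc (-kp) ξ) := by
    apply strictMonoOn_of_deriv_pos (convex_Ioc _ _) h.continuous.continuousOn
    intro x hx
    rw [interior_Ioc] at hx
    have hxm : x ∈ Set.Ioo (-kp) km := ⟨hx.1, hx.2.trans hξmem.2⟩
    rw [(key x hxm).deriv]
    have hgx : 0 < g x := by
      have := gsanti hxm hξmem hx.2
      rwa [hgξ] at this
    exact mul_pos (hhpos x hxm) hgx
  have santi : StrictAntiOn (fun y => h.eval y) (Set.Ico ξ km) := by
    apply strictAntiOn_of_deriv_neg (convex_Ico _ _) h.continuous.continuousOn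
    intro x hx
    rw [interior_Ico] at hx
    have hxm : x ∈ Set.Ioo (-kp) km := ⟨hξmem.1.trans hx.1, hx.2⟩
    rw [(key x hxm).deriv]
    have hgx : g x < 0 := by
      have := gsanti hξmem hxm hx.1
      rwa [hgξ] at this
    exact mul_neg_of_pos_of_neg (hhpos x hxm) hgx
  -- second derivative at ξ
  have gder : HasDerivAt g (∑ i, -((a i : ℝ) / (ε i * ξ + k i) ^ 2)) ξ := by
    apply HasDerivAt.fun_sum
    intro i _
    have hu : (0:ℝ) < ε i * ξ + k i := hpos ξ hξmem i
    have hden : HasDerivAt (fun y => ε i * y + k i) (ε i) ξ := by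
      simpa using ((hasDerivAt_id ξ).const_mul (ε i)).add_const (k i)
    have := (hasDerivAt_const ξ (ε i * (a i : ℝ))).fun_div hden hu.ne'
    refine this.congr_deriv ?_
    rcases hε i with h1 | h1 <;> rw [h1] <;> ring
  have hG'neg : ∑ i, -((a i : ℝ) / (ε i * ξ + k i) ^ 2) < 0 := by
    have : ∑ i, -((a i : ℝ) / (ε i * ξ + k i) ^ 2) < ∑ _i : Fin n, (0:ℝ) := by
      refine Finset.sum_lt_sum_of_nonempty ⟨ip, Finset.mem_univ ip⟩ fun i _ => ?_
      have : 0 < (a i : ℝ) / (ε i * ξ + k i) ^ 2 :=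
        div_pos (hapos i) (pow_pos (hpos ξ hξmem i) 2)
      linarith
    simpa using this
  have heqnhds : (fun y => (derivative h).eval y) =ᶠ[nhds ξ] fun y => h.eval y * g y := by
    filter_upwards [Ioo_mem_nhds hξmem.1 hξmem.2] with y hy using hderiv_eval y hy
  have hmul : HasDerivAt (fun y => h.eval y * g y)
      ((h.eval ξ * g ξ) * g ξ + h.eval ξ * ∑ i, -((a i : ℝ) / (ε i * ξ + k i) ^ 2)) ξ :=
    (key ξ hξmem).mul gder
  have h2eval : (derivative (derivative h)).eval ξ =
      h.eval ξ * ∑ i, -((a i : ℝ) / (ε i * ξ + k i) ^ 2) := by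
    rw [← Polynomial.deriv, heqnhds.deriv_eq, hmul.deriv, hgξ]
    ring
  have h2ne : (derivative (derivative h)).eval ξ ≠ 0 := by
    rw [h2eval]
    exact (mul_neg_of_pos_of_neg (hhpos ξ hξmem) hG'neg).ne
  refine ⟨ξ, hξmem, hroot, ?_, ?_, ?_, ?_, ?_⟩
  · -- uniqueness
    intro ζ hζ hzζ
    have hgζ : g ζ = 0 := by
      have hh2 := hderiv_eval ζ hζ
      rw [hzζ] at hh2
      exact (mul_eq_zero.mp hh2.symm).resolve_left (hhpos ζ hζ).ne'
    rcases lt_trichotomy ζ ξ with hlt | heq | hgt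
    · have := gsanti hζ hξmem hlt
      rw [hgζ, hgξ] at this
      exact absurd this (lt_irrefl 0)
    · exact heq
    · have := gsanti hξmem hζ hgt
      rw [hgζ, hgξ] at this
      exact absurd this (lt_irrefl 0)
  · -- simple root
    have hd1ne : derivative h ≠ 0 := by
      intro hc
      apply h2ne
      rw [hc]
      simp
    have hrm1 : 1 ≤ (derivative h).rootMultiplicity ξ := (rootMultiplicity_pos hd1ne).2 hroot
    have hrmle : (derivative h).rootMultiplicity ξ ≤ 1 := by
      by_contra hcon
      push_neg at hcon
      have hder := derivative_rootMultiplicity_of_root (p := derivative h) (t := ξ) hroot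
      have hpos2 : 0 < (derivative (derivative h)).rootMultiplicity ξ := by omega
      have hne2 : derivative (derivative h) ≠ 0 := by
        intro hc
        apply h2ne
        rw [hc]
        simp
      exact h2ne ((rootMultiplicity_pos hne2).1 hpos2)
    omega
  · -- local max
    filter_upwards [Ioo_mem_nhds hξmem.1 hξmem.2] with y hy
    rcases lt_trichotomy y ξ with hlt | heq | hgt
    · exact (smono ⟨hy.1, hlt.le⟩ ⟨hξmem.1, le_refl ξ⟩ hlt).le
    · exact heq ▸ le_refl _
    · exact (santi ⟨le_refl ξ, hξmem.2⟩ ⟨hgt.le, hy.2⟩ hgt).le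
  · -- strictly decreasing on (ξ, km)
    exact santi.mono Set.Ioo_subset_Ico_self
  · -- position of ξ versus γ
    have h0mem : (0:ℝ) ∈ Set.Ioo (-kp) km := ⟨by linarith, hkm0⟩
    have hg0 : g 0 = ∑ i, ε i * (a i : ℝ) / k i := by
      rw [hgdef]
      simp
    constructor
    · intro h0ξ
      have := gsanti h0mem hξmem h0ξ
      rw [hgξ, hg0] at this
      exact this
    · intro hγ
      by_contra hle
      push_neg at hle
      rcases eq_or_lt_of_le hle with heq | hlt
      · rw [heq] at hgξ
        rw [hg0] at hgξ
        rw [hgξ] at hγ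
        exact lt_irrefl 0 hγ
      · have := gsanti hξmem h0mem hlt
        rw [hgξ, hg0] at this
        linarith
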